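/- Let n ≥ 2 and let 1 ≤ p ≤ n−1 be an integer with 2p ≤ n. Then the function G_p is concave on the space of n×n real symmetric matrices: for all symmetric A, B and all t ∈ [0,1], G_p(t·A + (1−t)·B) ≥ t·G_p(A) + (1−t)·G_p(B). -/

import Mathlib

open Matrix Metric Real

noncomputable section

attribute [local instance] Matrix.normedAddCommGroup Matrix.normedSpace

/-- The `i`-th partial derivative of `u` at `x`. -/
def pd {n : ℕ} (u : EuclideanSpace ℝ (Fin n) → ℝ) (x : EuclideanSpace ℝ (Fin n)) (i : Fin n) : ℝ :=
  fderiv ℝ u x (EuclideanSpace.single i 1)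

/-- The Hessian matrix `∇²u(x)`. -/
def hessian {n : ℕ} (u : EuclideanSpace ℝ (Fin n) → ℝ) (x : EuclideanSpace ℝ (Fin n)) :
    Matrix (Fin n) (Fin n) ℝ :=
  Matrix.of fun i j => pd (fun y => pd u y j) x i

/-- The conformal Schouten matrix `A^u(x) = ∇²u + ∇u ⊗ ∇u − (|∇u|²/2)·Iₙ`. -/
def schouten {n : ℕ} (u : EuclideanSpace ℝ (Fin n) → ℝ) (x : EuclideanSpace ℝ (Fin n)) :
    Matrix (Fin n) (Fin n) ℝ :=
  hessian u x + Matrix.of (fun i j => pd u x i * pd u x j)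
    - ((∑ i, (pd u x i) ^ 2) / 2) • (1 : Matrix (Fin n) (Fin n) ℝ)

/-- Eigenvalues of a symmetric matrix, sorted in nondecreasing order. -/
def sortedEig {n : ℕ} (A : Matrix (Fin n) (Fin n) ℝ) (hA : A.IsHermitian) : Fin n → ℝ :=
  hA.eigenvalues ∘ Tuple.sort hA.eigenvalues

/-- `G_p(A) = (n−p)·(λ₁+⋯+λ_p) + p·(λ_{p+1}+⋯+λₙ)` (junk value `0` on non-symmetric input). -/
def Gp {n : ℕ} (p : ℕ) (A : Matrix (Fin n) (Fin n) ℝ) : ℝ :=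
  if hA : A.IsHermitian then
    ∑ i : Fin n, (if (i : ℕ) < p then ((n : ℝ) - p) else (p : ℝ)) * sortedEig A hA i
  else 0

/-- Operator norm of a matrix, acting on Euclidean space. -/
def opNorm {n : ℕ} (A : Matrix (Fin n) (Fin n) ℝ) : ℝ :=
  ‖LinearMap.toContinuousLinearMap (Matrix.toEuclideanLin A)‖

/-- `F` is uniformly elliptic with ellipticity constants `0 < l ≤ L`. -/
def UniformlyElliptic {n : ℕ} (F : Matrix (Fin n) (Fin n) ℝ → ℝ) (l L : ℝ) : Prop :=
  0 < l ∧ l ≤ L ∧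
    ∀ W N : Matrix (Fin n) (Fin n) ℝ, W.IsHermitian → N.PosSemidef →
      l * opNorm N ≤ F (W + N) - F W ∧ F (W + N) - F W ≤ L * opNorm N

/-- `F` is concave on the space of symmetric matrices. -/
def ConcaveOnSym {n : ℕ} (F : Matrix (Fin n) (Fin n) ℝ → ℝ) : Prop :=
  ∀ A B : Matrix (Fin n) (Fin n) ℝ, A.IsHermitian → B.IsHermitian →
    ∀ t : ℝ, 0 ≤ t → t ≤ 1 → t * F A + (1 - t) * F B ≤ F (t • A + (1 - t) • B)


open scoped RealInnerProductSpace

lemma card_filter_lt (n p : ℕ) (hp : p ≤ n) :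
    ((Finset.univ : Finset (Fin n)).filter (fun i : Fin n => (i : ℕ) < p)).card = p := by
  have h1 : ((Finset.range n).filter (fun i => i < p)) = Finset.range p := by
    ext i; simp only [Finset.mem_filter, Finset.mem_range]; omega
  calc ((Finset.univ : Finset (Fin n)).filter (fun i : Fin n => (i : ℕ) < p)).card
      = ∑ i : Fin n, if (i : ℕ) < p then 1 else 0 := by rw [Finset.card_filter]
    _ = ∑ i ∈ Finset.range n, if i < p then 1 else 0 :=
        Fin.sum_univ_eq_sum_range (fun i => if i < p then 1 else 0) n
    _ = ((Finset.range n).filter (fun i => i < p)).card := (Finset.card_filter _ _).symm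
    _ = p := by rw [h1, Finset.card_range]

lemma weight_sum_le {n p : ℕ} (hp : p < n) (g μ : Fin n → ℝ) (hg : Monotone g)
    (h0 : ∀ j, 0 ≤ μ j) (h1 : ∀ j, μ j ≤ 1) (hs : ∑ j, μ j = p) :
    ∑ j ∈ Finset.univ.filter (fun j : Fin n => (j : ℕ) < p), g j ≤ ∑ j, g j * μ j := by
  set c := g ⟨p, hp⟩ with hc
  have key : ∀ j : Fin n,
      (if (j : ℕ) < p then g j else 0) + c * (μ j - if (j : ℕ) < p then 1 else 0)
        ≤ g j * μ j := by
    intro j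
    by_cases h : (j : ℕ) < p
    · have hgj : g j ≤ c := hg (by simp only [Fin.le_def]; omega)
      simp only [if_pos h]
      nlinarith [h1 j]
    · have hgj : c ≤ g j := hg (by simp only [Fin.le_def]; omega)
      simp only [if_neg h]
      nlinarith [h0 j]
  have hsum := Finset.sum_le_sum (fun j (_ : j ∈ Finset.univ) => key j)
  have hone : ∑ j : Fin n, (if (j : ℕ) < p then (1 : ℝ) else 0) = p := by
    rw [Finset.sum_ite, Finset.sum_const, Finset.sum_const, card_filter_lt n p hp.le]
    simp
  rw [Finset.sum_add_distrib, ← Finset.mul_sum, Finset.sum_sub_distrib, hs, hone,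
    sub_self, mul_zero, add_zero, ← Finset.sum_filter] at hsum
  exact hsum

lemma eigen_apply {n : ℕ} (A : Matrix (Fin n) (Fin n) ℝ) (hA : A.IsHermitian) (j : Fin n) :
    Matrix.toEuclideanLin A (hA.eigenvectorBasis j)
      = hA.eigenvalues j • hA.eigenvectorBasis j := by
  apply (WithLp.equiv 2 _).injective
  simp only [WithLp.equiv_apply, Matrix.ofLp_toEuclideanLin_apply, WithLp.ofLp_smul]
  simpa using hA.mulVec_eigenvectorBasis j

lemma qf_expand {n : ℕ} (A : Matrix (Fin n) (Fin n) ℝ) (hA : A.IsHermitian)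
    (w : EuclideanSpace ℝ (Fin n)) :
    ⟪w, Matrix.toEuclideanLin A w⟫
      = ∑ j, hA.eigenvalues j * (⟪hA.eigenvectorBasis j, w⟫) ^ 2 := by
  have hsym : (Matrix.toEuclideanLin A).IsSymmetric :=
    Matrix.isHermitian_iff_isSymmetric.1 hA
  rw [← (hA.eigenvectorBasis).sum_inner_mul_inner w (Matrix.toEuclideanLin A w)]
  refine Finset.sum_congr rfl fun j _ => ?_
  rw [← hsym (hA.eigenvectorBasis j) w, eigen_apply A hA j, inner_smul_left]
  have : ⟪hA.eigenvectorBasis j, w⟫ = ⟪w, hA.eigenvectorBasis j⟫ := real_inner_comm _ _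
  simp only [RCLike.star_def, starRingEnd_apply, star_trivial]
  rw [← this]; ring

lemma parseval_sq {n : ℕ} (b : OrthonormalBasis (Fin n) ℝ (EuclideanSpace ℝ (Fin n)))
    (x : EuclideanSpace ℝ (Fin n)) :
    ∑ i, (⟪b i, x⟫) ^ 2 = ‖x‖ ^ 2 := by
  have := b.sum_inner_mul_inner x x
  rw [← real_inner_self_eq_norm_sq]
  rw [← this]
  refine Finset.sum_congr rfl fun i _ => ?_
  rw [real_inner_comm x (b i)]; ring


lemma kyFan {n p : ℕ} (hp : p < n) (A : Matrix (Fin n) (Fin n) ℝ) (hA : A.IsHermitian)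
    (v : OrthonormalBasis (Fin n) ℝ (EuclideanSpace ℝ (Fin n))) (S : Finset (Fin n))
    (hS : S.card = p) :
    ∑ i ∈ Finset.univ.filter (fun i : Fin n => (i : ℕ) < p), sortedEig A hA i
      ≤ ∑ i ∈ S, ⟪v i, Matrix.toEuclideanLin A (v i)⟫ := by
  set u := hA.eigenvectorBasis with hu
  set lam := hA.eigenvalues with hlam
  set μ : Fin n → ℝ := fun j => ∑ i ∈ S, (⟪u j, v i⟫) ^ 2 with hμ
  have hrhs : ∑ i ∈ S, ⟪v i, Matrix.toEuclideanLin A (v i)⟫ = ∑ j, lam j * μ j := by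
    simp_rw [qf_expand A hA, hμ, Finset.mul_sum]
    rw [Finset.sum_comm]
  have hμ0 : ∀ j, 0 ≤ μ j := fun j => Finset.sum_nonneg fun i _ => sq_nonneg _
  have hμ1 : ∀ j, μ j ≤ 1 := by
    intro j
    have h1 : ∑ i, (⟪u j, v i⟫) ^ 2 = 1 := by
      have := v.sum_inner_mul_inner (u j) (u j)
      calc ∑ i, (⟪u j, v i⟫) ^ 2 = ∑ i, ⟪u j, v i⟫ * ⟪v i, u j⟫ := by
            refine Finset.sum_congr rfl fun i _ => ?_
            rw [real_inner_comm (v i) (u j)]; ring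
        _ = ⟪u j, u j⟫ := this
        _ = 1 := by
            rw [real_inner_self_eq_norm_sq, u.orthonormal.1 j]; norm_num
    calc μ j ≤ ∑ i, (⟪u j, v i⟫) ^ 2 :=
          Finset.sum_le_sum_of_subset_of_nonneg (Finset.subset_univ S)
            (fun i _ _ => sq_nonneg _)
      _ = 1 := h1
  have hμs : ∑ j, μ j = p := by
    rw [Finset.sum_comm]
    have : ∀ i ∈ S, ∑ j, (⟪u j, v i⟫) ^ 2 = 1 := by
      intro i _
      rw [parseval_sq u (v i), v.orthonormal.1 i]; norm_num
    rw [Finset.sum_congr rfl this, Finset.sum_const, hS]; simp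
  have hmono : Monotone (lam ∘ Tuple.sort lam) := Tuple.monotone_sort lam
  have hkey := weight_sum_le hp (lam ∘ Tuple.sort lam) (μ ∘ Tuple.sort lam) hmono
    (fun j => hμ0 _) (fun j => hμ1 _)
    ((Equiv.sum_comp (Tuple.sort lam) μ).trans hμs)
  have heq : ∑ j, (lam ∘ Tuple.sort lam) j * (μ ∘ Tuple.sort lam) j = ∑ j, lam j * μ j :=
    Equiv.sum_comp (Tuple.sort lam) (fun j => lam j * μ j)
  rw [hrhs, ← heq]
  exact hkey

lemma qf_eigen {n : ℕ} (A : Matrix (Fin n) (Fin n) ℝ) (hA : A.IsHermitian) (j : Fin n) :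
    ⟪hA.eigenvectorBasis j, Matrix.toEuclideanLin A (hA.eigenvectorBasis j)⟫
      = hA.eigenvalues j := by
  rw [eigen_apply A hA j, real_inner_smul_right, real_inner_self_eq_norm_sq,
    hA.eigenvectorBasis.orthonormal.1 j]
  norm_num

lemma sum_small_eq {n p : ℕ} (hp : p ≤ n) (C : Matrix (Fin n) (Fin n) ℝ)
    (hC : C.IsHermitian) :
    ∃ S : Finset (Fin n), S.card = p ∧
      ∑ i ∈ Finset.univ.filter (fun i : Fin n => (i : ℕ) < p), sortedEig C hC i
        = ∑ i ∈ S, ⟪hC.eigenvectorBasis i, Matrix.toEuclideanLin C (hC.eigenvectorBasis i)⟫ := by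
  refine ⟨(Finset.univ.filter (fun i : Fin n => (i : ℕ) < p)).image (Tuple.sort hC.eigenvalues),
    ?_, ?_⟩
  · rw [Finset.card_image_of_injective _ (Tuple.sort hC.eigenvalues).injective,
      card_filter_lt n p hp]
  · rw [Finset.sum_image (fun a _ b _ h => (Tuple.sort hC.eigenvalues).injective h)]
    refine Finset.sum_congr rfl fun i _ => ?_
    rw [qf_eigen C hC]
    rfl

lemma trace_eq_sum_eig {n : ℕ} (A : Matrix (Fin n) (Fin n) ℝ) (hA : A.IsHermitian) :
    A.trace = ∑ i, hA.eigenvalues i := by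
  nth_rewrite 1 [hA.spectral_theorem]
  rw [Unitary.conjStarAlgAut_apply, Matrix.trace_mul_cycle]
  have h1 : (star (hA.eigenvectorUnitary : Matrix (Fin n) (Fin n) ℝ))
      * (hA.eigenvectorUnitary : Matrix (Fin n) (Fin n) ℝ) = 1 := by
    simpa using unitary.coe_star_mul_self hA.eigenvectorUnitary
  rw [h1, Matrix.one_mul, Matrix.trace_diagonal]
  simp

lemma Gp_eq {n : ℕ} (p : ℕ) (A : Matrix (Fin n) (Fin n) ℝ) (hA : A.IsHermitian) :
    Gp p A = p * A.trace
      + ((n : ℝ) - 2 * p)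
        * ∑ i ∈ Finset.univ.filter (fun i : Fin n => (i : ℕ) < p), sortedEig A hA i := by
  rw [Gp, dif_pos hA]
  have htr : A.trace = ∑ i, sortedEig A hA i := by
    rw [trace_eq_sum_eig A hA, sortedEig]
    exact (Equiv.sum_comp (Tuple.sort hA.eigenvalues) hA.eigenvalues).symm
  rw [htr, Finset.mul_sum, Finset.sum_filter, Finset.mul_sum, ← Finset.sum_add_distrib]
  refine Finset.sum_congr rfl fun i _ => ?_
  by_cases h : (i : ℕ) < p
  · simp only [if_pos h]; ring
  · simp only [if_neg h]; ring

/-- **Concavity of `G_p`** for `2p ≤ n`, on the space of symmetric matrices. -/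
theorem Gp_concave (n p : ℕ) (hn : 2 ≤ n) (hp1 : 1 ≤ p) (hp2 : p ≤ n - 1) (hp3 : 2 * p ≤ n)
    (A B : Matrix (Fin n) (Fin n) ℝ) (hA : A.IsHermitian) (hB : B.IsHermitian)
    (t : ℝ) (ht0 : 0 ≤ t) (ht1 : t ≤ 1) :
    t * Gp p A + (1 - t) * Gp p B ≤ Gp p (t • A + (1 - t) • B) := by
  have hpn : p < n := by omega
  have hC : (t • A + (1 - t) • B).IsHermitian := by
    unfold Matrix.IsHermitian at hA hB ⊢
    rw [conjTranspose_add, conjTranspose_smul, conjTranspose_smul, hA, hB,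
      star_trivial, star_trivial]
  have hA' : A.IsHermitian := hA
  have hB' : B.IsHermitian := hB
  set C := t • A + (1 - t) • B with hCdef
  set w := hC.eigenvectorBasis with hw
  obtain ⟨S, hScard, hSeq⟩ := sum_small_eq hpn.le C hC
  have hkA := kyFan hpn A hA w S hScard
  have hkB := kyFan hpn B hB w S hScard
  have hsplit : ∀ i : Fin n, ⟪w i, Matrix.toEuclideanLin C (w i)⟫
      = t * ⟪w i, Matrix.toEuclideanLin A (w i)⟫
        + (1 - t) * ⟪w i, Matrix.toEuclideanLin B (w i)⟫ := by
    intro i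
    rw [hCdef, map_add, _root_.map_smul, _root_.map_smul]
    simp only [LinearMap.add_apply, LinearMap.smul_apply, inner_add_right,
      inner_smul_right, real_inner_smul_right]
  have hf : t * (∑ i ∈ Finset.univ.filter (fun i : Fin n => (i : ℕ) < p), sortedEig A hA i)
      + (1 - t) * (∑ i ∈ Finset.univ.filter (fun i : Fin n => (i : ℕ) < p), sortedEig B hB i)
      ≤ ∑ i ∈ Finset.univ.filter (fun i : Fin n => (i : ℕ) < p), sortedEig C hC i := by
    rw [hSeq]
    calc t * (∑ i ∈ Finset.univ.filter (fun i : Fin n => (i : ℕ) < p), sortedEig A hA i)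
        + (1 - t) * (∑ i ∈ Finset.univ.filter (fun i : Fin n => (i : ℕ) < p), sortedEig B hB i)
        ≤ t * ∑ i ∈ S, ⟪w i, Matrix.toEuclideanLin A (w i)⟫
          + (1 - t) * ∑ i ∈ S, ⟪w i, Matrix.toEuclideanLin B (w i)⟫ := by
          apply add_le_add
          · exact mul_le_mul_of_nonneg_left hkA ht0
          · exact mul_le_mul_of_nonneg_left hkB (by linarith)
      _ = ∑ i ∈ S, ⟪w i, Matrix.toEuclideanLin C (w i)⟫ := by
          rw [Finset.mul_sum, Finset.mul_sum, ← Finset.sum_add_distrib]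
          exact (Finset.sum_congr rfl fun i _ => (hsplit i).symm)
  have htr : C.trace = t * A.trace + (1 - t) * B.trace := by
    rw [hCdef, Matrix.trace_add, Matrix.trace_smul, Matrix.trace_smul,
      smul_eq_mul, smul_eq_mul]
  have hwt : (0 : ℝ) ≤ (n : ℝ) - 2 * p := by
    have : ((2 * p : ℕ) : ℝ) ≤ (n : ℕ) := Nat.cast_le.mpr hp3
    push_cast at this
    linarith
  have h2 := mul_le_mul_of_nonneg_left hf hwt
  rw [Gp_eq p A hA, Gp_eq p B hB, Gp_eq p C hC, htr]
  nlinarith [h2]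

end
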